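/- arXiv:1708.01077 — 2 statements merged into one kernel-verified Lean document; each statement's English description precedes it below -/
import Mathlib

section
/- Let f₁, f₂ be analytic circle diffeomorphisms with f₁ ≠ id and f₂ ≠ id. Then there exists an analytic circle diffeomorphism h such that the map (h∘f₁∘h⁻¹) ∘ f₂⁻¹ has a fixed point on ℝ/ℤ; in particular rot((h∘f₁∘h⁻¹) ∘ f₂⁻¹) = 0. -/
open Filter Topology

/-- An analytic circle diffeomorphism, given by an analytic, strictly increasing lift
`F : ℝ → ℝ` with `F (x+1) = F x + 1`, together with an analytic inverse. -/
structure AnalyticCircleDiffeo where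
  toFun : ℝ → ℝ
  invFun : ℝ → ℝ
  analyticAt_toFun : ∀ x, AnalyticAt ℝ toFun x
  analyticAt_invFun : ∀ x, AnalyticAt ℝ invFun x
  strictMono_toFun : StrictMono toFun
  leftInverse : Function.LeftInverse invFun toFun
  rightInverse : Function.RightInverse invFun toFun
  map_add_one : ∀ x, toFun (x + 1) = toFun x + 1

namespace AnalyticCircleDiffeo

/-- The rotation number of (the chosen lift of) a circle diffeomorphism. -/
noncomputable def rot (f : AnalyticCircleDiffeo) : ℝ :=
  limUnder atTop fun n : ℕ => f.toFun^[n] 0 / n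

/-- The composition of two analytic circle diffeomorphisms. -/
def comp (f g : AnalyticCircleDiffeo) : AnalyticCircleDiffeo where
  toFun := f.toFun ∘ g.toFun
  invFun := g.invFun ∘ f.invFun
  analyticAt_toFun := fun x => (f.analyticAt_toFun _).comp (g.analyticAt_toFun x)
  analyticAt_invFun := fun x => (g.analyticAt_invFun _).comp (f.analyticAt_invFun x)
  strictMono_toFun := f.strictMono_toFun.comp g.strictMono_toFun
  leftInverse := fun x => by
    show g.invFun (f.invFun (f.toFun (g.toFun x))) = x
    rw [f.leftInverse (g.toFun x), g.leftInverse x]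
  rightInverse := fun x => by
    show f.toFun (g.toFun (g.invFun (f.invFun x))) = x
    rw [g.rightInverse (f.invFun x), f.rightInverse x]
  map_add_one := fun x => by
    show f.toFun (g.toFun (x + 1)) = f.toFun (g.toFun x) + 1
    rw [g.map_add_one, f.map_add_one]

/-- The inverse of an analytic circle diffeomorphism. -/
def symm (f : AnalyticCircleDiffeo) : AnalyticCircleDiffeo where
  toFun := f.invFun
  invFun := f.toFun
  analyticAt_toFun := f.analyticAt_invFun
  analyticAt_invFun := f.analyticAt_toFun
  strictMono_toFun := fun x y hxy => by
    have h := f.strictMono_toFun.lt_iff_lt (a := f.invFun x) (b := f.invFun y)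
    rw [f.rightInverse x, f.rightInverse y] at h
    exact h.mp hxy
  leftInverse := f.rightInverse
  rightInverse := f.leftInverse
  map_add_one := fun x => by
    apply f.strictMono_toFun.injective
    rw [f.rightInverse, f.map_add_one, f.rightInverse]

/-- The circle diffeomorphism `f + ω : x ↦ f x + ω`. -/
noncomputable def addConst (f : AnalyticCircleDiffeo) (ω : ℝ) : AnalyticCircleDiffeo where
  toFun := fun x => f.toFun x + ω
  invFun := fun x => f.invFun (x - ω)
  analyticAt_toFun := fun x => (f.analyticAt_toFun x).add analyticAt_const
  analyticAt_invFun := fun x => by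
    have h1 : AnalyticAt ℝ (fun y : ℝ => y - ω) x := analyticAt_id.sub analyticAt_const
    have h2 : AnalyticAt ℝ (f.invFun ∘ fun y : ℝ => y - ω) x :=
      AnalyticAt.comp (g := f.invFun) (f := fun y : ℝ => y - ω)
        (f.analyticAt_invFun (x - ω)) h1
    exact h2
  strictMono_toFun := fun x y hxy => by
    have h := f.strictMono_toFun hxy
    show f.toFun x + ω < f.toFun y + ω
    linarith
  leftInverse := fun x => by
    show f.invFun (f.toFun x + ω - ω) = x
    rw [add_sub_cancel_right, f.leftInverse x]
  rightInverse := fun x => by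
    show f.toFun (f.invFun (x - ω)) + ω = x
    rw [f.rightInverse (x - ω)]; ring
  map_add_one := fun x => by
    show f.toFun (x + 1) + ω = f.toFun x + ω + 1
    rw [f.map_add_one]; ring

/-- Two circle diffeomorphisms are analytically conjugate: `f₂ = h ∘ f₁ ∘ h⁻¹` as maps
of `ℝ/ℤ`; in terms of lifts, `h ∘ f₁ = f₂ ∘ h + k` for some integer `k`. -/
def Conjugate (f₁ f₂ : AnalyticCircleDiffeo) : Prop :=
  ∃ h : AnalyticCircleDiffeo, ∃ k : ℤ,
    ∀ x, h.toFun (f₁.toFun x) = f₂.toFun (h.toFun x) + k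

/-- `f` is the identity of `ℝ/ℤ`, i.e. its lift is an integer translation. -/
def IsId (f : AnalyticCircleDiffeo) : Prop :=
  ∃ k : ℤ, ∀ x, f.toFun x = x + k

/-- A circle diffeomorphism (with rotation number `0 mod 1`) is hyperbolic if it has a
fixed point on `ℝ/ℤ` and the multiplier at every fixed point is `≠ 1`. -/
def Hyperbolic (f : AnalyticCircleDiffeo) : Prop :=
  (∃ x : ℝ, ∃ k : ℤ, f.toFun x = x + k) ∧
    ∀ x : ℝ, (∃ k : ℤ, f.toFun x = x + k) → deriv f.toFun x ≠ 1

end AnalyticCircleDiffeo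

/-- A real number is Diophantine. -/
def Diophantine (ρ : ℝ) : Prop :=
  ∃ C > (0:ℝ), ∃ β > (0:ℝ), ∀ p : ℤ, ∀ q : ℕ, 0 < q →
    |ρ - p / q| ≥ C / (q : ℝ) ^ ((2:ℝ) + β)



namespace AnalyticCircleDiffeo

noncomputable def mk' (g : ℝ → ℝ) (hg : ∀ x, AnalyticAt ℝ g x)
    (hmono : StrictMono g) (hsurj : Function.Surjective g)
    (hd : ∀ x, deriv g x ≠ 0)
    (hper : ∀ x, g (x + 1) = g x + 1) : AnalyticCircleDiffeo where
  toFun := g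
  invFun := fun y => (StrictMono.orderIsoOfSurjective g hmono hsurj).symm y
  analyticAt_toFun := hg
  analyticAt_invFun := by
    intro y
    set e := StrictMono.orderIsoOfSurjective g hmono hsurj with he
    set P := e.toHomeomorph.toOpenPartialHomeomorph with hP
    obtain ⟨x, rfl⟩ := hsurj y
    have hPg : (P : ℝ → ℝ) = g := rfl
    have hfd : HasFDerivAt g ((1 : ℝ →L[ℝ] ℝ).smulRight (deriv g x)) x :=
      ((hg x).differentiableAt.hasDerivAt).hasFDerivAt
    set i : ℝ ≃L[ℝ] ℝ :=
      (ContinuousLinearEquiv.unitsEquivAut ℝ) (Units.mk0 (deriv g x) (hd x)) with hi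
    have hcoe : (i : ℝ →L[ℝ] ℝ) = (1 : ℝ →L[ℝ] ℝ).smulRight (deriv g x) := by
      ext z
      simp [hi, ContinuousLinearEquiv.unitsEquivAut_apply, mul_comm]
    have hfder : fderiv ℝ (P : ℝ → ℝ) x = (i : ℝ →L[ℝ] ℝ) := by
      rw [hPg, hfd.fderiv, hcoe]
    have h0 : x ∈ P.source := by simp [hP]
    have hA := P.analyticAt_symm' h0 (by rw [hPg]; exact hg x) hfder
    have hPx : P x = g x := rfl
    rw [hPx] at hA
    refine hA.congr ?_
    filter_upwards with z
    rfl
  strictMono_toFun := hmono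
  leftInverse := fun x => (StrictMono.orderIsoOfSurjective g hmono hsurj).symm_apply_apply x
  rightInverse := fun x => (StrictMono.orderIsoOfSurjective g hmono hsurj).apply_symm_apply x
  map_add_one := hper

@[simp] lemma mk'_toFun (g hg hmono hsurj hd hper) (x : ℝ) :
    (mk' g hg hmono hsurj hd hper).toFun x = g x := rfl

noncomputable def auxS (x : ℝ) : ℝ := Real.sin (Real.pi * x) ^ 2

lemma auxS_nonneg (x : ℝ) : 0 ≤ auxS x := sq_nonneg _

lemma auxS_le_one (x : ℝ) : auxS x ≤ 1 := Real.sin_sq_le_one _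

lemma auxS_pos {x : ℝ} (hx : x ∈ Set.Ioo (0:ℝ) 1) : 0 < auxS x := by
  have : 0 < Real.sin (Real.pi * x) := by
    apply Real.sin_pos_of_pos_of_lt_pi
    · exact mul_pos Real.pi_pos hx.1
    · nlinarith [Real.pi_pos, hx.2]
  unfold auxS; positivity

lemma auxS_zero : auxS 0 = 0 := by simp [auxS]

lemma auxS_add_one (x : ℝ) : auxS (x + 1) = auxS x := by
  have : Real.pi * (x + 1) = Real.pi * x + Real.pi := by ring
  rw [auxS, this, Real.sin_add_pi, neg_sq]; rfl

lemma auxS_hasDerivAt (x : ℝ) :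
    HasDerivAt auxS (2 * Real.sin (Real.pi * x) * (Real.cos (Real.pi * x) * Real.pi)) x := by
  have h1 : HasDerivAt (fun y : ℝ => Real.pi * y) (Real.pi * 1) x :=
    (hasDerivAt_id x).const_mul Real.pi
  have h2 : HasDerivAt (fun y : ℝ => Real.sin (Real.pi * y))
      (Real.cos (Real.pi * x) * (Real.pi * 1)) x :=
    (Real.hasDerivAt_sin (Real.pi * x)).comp x h1
  have h3 : HasDerivAt auxS (((2:ℕ):ℝ) * Real.sin (Real.pi * x) ^ (2 - 1) *
      (Real.cos (Real.pi * x) * (Real.pi * 1))) x := h2.pow 2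
  convert h3 using 1
  ring

lemma auxAnalyticAt_sin' (x : ℝ) : AnalyticAt ℝ Real.sin x := by
  have hc : ∀ z : ℂ, AnalyticAt ℂ Complex.sin z := by
    intro z
    have : Complex.sin = fun z : ℂ =>
        (Complex.exp (-z * Complex.I) - Complex.exp (z * Complex.I)) * Complex.I / 2 := rfl
    rw [this]
    apply AnalyticAt.div
    · exact ((analyticAt_cexp.comp ((analyticAt_id.neg).mul analyticAt_const)).sub
        (analyticAt_cexp.comp (analyticAt_id.mul analyticAt_const))).mul analyticAt_const
    · exact analyticAt_const
    · norm_num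
  have h1 : AnalyticAt ℝ (fun t : ℝ => (Complex.sin (Complex.ofRealCLM t)).re) x :=
    (Complex.reCLM.analyticAt _).comp
      ((hc _).restrictScalars.comp (Complex.ofRealCLM.analyticAt x))
  refine h1.congr ?_
  filter_upwards with t
  simp [Complex.sin_ofReal_re]

lemma auxS_analyticAt (x : ℝ) : AnalyticAt ℝ auxS x := by
  have h1 : AnalyticAt ℝ (fun y : ℝ => Real.pi * y) x := analyticAt_const.mul analyticAt_id
  exact ((auxAnalyticAt_sin' (Real.pi * x)).comp h1).pow 2

lemma auxBump_deriv_pos {t : ℝ} (ht : |t| ≤ 1 / (4 * Real.pi)) (x : ℝ) :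
    0 < deriv (fun y => y + t * auxS y) x := by
  have hD : HasDerivAt (fun y => y + t * auxS y)
      (1 + t * (2 * Real.sin (Real.pi * x) * (Real.cos (Real.pi * x) * Real.pi))) x :=
    (hasDerivAt_id x).add ((auxS_hasDerivAt x).const_mul t)
  rw [hD.deriv]
  have hπ := Real.pi_pos
  have h1 : |Real.sin (Real.pi * x)| ≤ 1 := Real.abs_sin_le_one _
  have h2 : |Real.cos (Real.pi * x)| ≤ 1 := Real.abs_cos_le_one _
  have h3 : |t * (2 * Real.sin (Real.pi * x) * (Real.cos (Real.pi * x) * Real.pi))| ≤ 1/2 := by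
    rw [abs_mul, abs_mul, abs_mul, abs_mul]
    rw [abs_of_pos hπ]
    have : |(2:ℝ)| = 2 := by norm_num
    rw [this]
    calc |t| * (2 * |Real.sin (Real.pi * x)| * (|Real.cos (Real.pi * x)| * Real.pi))
        ≤ (1 / (4 * Real.pi)) * (2 * 1 * (1 * Real.pi)) := by
          apply mul_le_mul ht _ (by positivity) (by positivity)
          apply mul_le_mul _ _ (by positivity) (by positivity)
          · nlinarith
          · nlinarith
      _ = 1/2 := by field_simp; ring
  have := abs_le.1 h3
  linarith [this.1]

lemma auxBump_strictMono {t : ℝ} (ht : |t| ≤ 1 / (4 * Real.pi)) :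
    StrictMono (fun y => y + t * auxS y) :=
  strictMono_of_deriv_pos (auxBump_deriv_pos ht)

lemma auxBump_surj (t : ℝ) : Function.Surjective (fun y => y + t * auxS y) := by
  intro y
  have hco : Continuous (fun y => y + t * auxS y) := by
    rw [continuous_iff_continuousAt]
    exact fun x => (analyticAt_id.add (analyticAt_const.mul (auxS_analyticAt x))).continuousAt
  have hb : ∀ x, |t * auxS x| ≤ |t| := by
    intro x
    rw [abs_mul]
    have h1 := auxS_nonneg x
    have h2 := auxS_le_one x
    calc |t| * |auxS x| ≤ |t| * 1 := by
          apply mul_le_mul_of_nonneg_left _ (abs_nonneg t)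
          rw [abs_of_nonneg h1]; exact h2
      _ = |t| := mul_one _
  have hlow : (fun y => y + t * auxS y) (y - |t| - 1) ≤ y := by
    have := abs_le.1 (hb (y - |t| - 1))
    dsimp only
    linarith [this.2]
  have hhigh : y ≤ (fun y => y + t * auxS y) (y + |t| + 1) := by
    have := abs_le.1 (hb (y + |t| + 1))
    dsimp only
    linarith [this.1]
  have hle : y - |t| - 1 ≤ y + |t| + 1 := by linarith [abs_nonneg t]
  have := intermediate_value_Icc hle hco.continuousOn
  obtain ⟨x, _, hx⟩ := this ⟨hlow, hhigh⟩
  exact ⟨x, hx⟩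

lemma auxBump_add_one (t x : ℝ) :
    (fun y => y + t * auxS y) (x + 1) = (fun y => y + t * auxS y) x + 1 := by
  simp only [auxS_add_one]; ring

noncomputable def auxBump (t : ℝ) (ht : |t| ≤ 1 / (4 * Real.pi)) : AnalyticCircleDiffeo :=
  mk' (fun y => y + t * auxS y)
    (fun x => analyticAt_id.add (analyticAt_const.mul (auxS_analyticAt x)))
    (auxBump_strictMono ht) (auxBump_surj t)
    (fun x => (auxBump_deriv_pos ht x).ne')
    (auxBump_add_one t)

def idD : AnalyticCircleDiffeo where
  toFun := id
  invFun := id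
  analyticAt_toFun := fun _ => analyticAt_id
  analyticAt_invFun := fun _ => analyticAt_id
  strictMono_toFun := strictMono_id
  leftInverse := fun _ => rfl
  rightInverse := fun _ => rfl
  map_add_one := fun _ => rfl

lemma map_add_int (f : AnalyticCircleDiffeo) (x : ℝ) (k : ℤ) :
    f.toFun (x + k) = f.toFun x + k := by
  induction k using Int.induction_on with
  | zero => simp
  | succ n ih =>
    have h := f.map_add_one (x + n)
    push_cast at ih ⊢
    rw [show x + ((n:ℝ) + 1) = x + n + 1 by ring, h, ih]
    ring
  | pred n ih =>
    have h := f.map_add_one (x + (-(n:ℝ) - 1))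
    push_cast at ih ⊢
    rw [show x + (-(n:ℝ) - 1) + 1 = x + -(n:ℝ) by ring] at h
    linarith [ih, h]

lemma iterate_map_add_int (f : AnalyticCircleDiffeo) (n : ℕ) (x : ℝ) (k : ℤ) :
    f.toFun^[n] (x + k) = f.toFun^[n] x + k := by
  induction n generalizing x with
  | zero => simp
  | succ m ih =>
    rw [Function.iterate_succ_apply, Function.iterate_succ_apply, map_add_int, ih]

lemma rot_eq_of_fixed (f : AnalyticCircleDiffeo) (x₀ : ℝ) (k : ℤ)
    (hfix : f.toFun x₀ = x₀ + k) : rot f = k := by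
  have hiter : ∀ n : ℕ, f.toFun^[n] x₀ = x₀ + n * k := by
    intro n
    induction n with
    | zero => simp
    | succ m ih =>
      rw [Function.iterate_succ_apply, hfix, iterate_map_add_int, ih]
      push_cast
      ring
  obtain ⟨M, hM⟩ : ∃ M : ℤ, |x₀| ≤ M := ⟨⌈|x₀|⌉, Int.le_ceil _⟩
  have habs := abs_le.1 hM
  have hmono : ∀ n : ℕ, Monotone (f.toFun^[n]) := fun n => f.strictMono_toFun.monotone.iterate n
  have hup : ∀ n : ℕ, f.toFun^[n] 0 ≤ x₀ + n * k + M := by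
    intro n
    have h1 : (0:ℝ) ≤ x₀ + M := by linarith
    have h2 := hmono n h1
    rw [show x₀ + (M:ℝ) = x₀ + (M:ℤ) by norm_num] at h2
    rw [iterate_map_add_int, hiter] at h2
    simpa using h2.trans_eq (by ring)
  have hdown : ∀ n : ℕ, x₀ + n * k - M ≤ f.toFun^[n] 0 := by
    intro n
    have h1 : x₀ + (-M : ℤ) ≤ (0:ℝ) := by push_cast; linarith
    have h2 := hmono n h1
    rw [iterate_map_add_int, hiter] at h2
    push_cast at h2
    linarith
  have htend : Tendsto (fun n : ℕ => f.toFun^[n] 0 / n) atTop (𝓝 (k : ℝ)) := by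
    have hl : Tendsto (fun n : ℕ => (x₀ - M) / n + k) atTop (𝓝 (k : ℝ)) := by
      have := (tendsto_const_div_atTop_nhds_zero_nat (x₀ - M)).add tendsto_const_nhds (b := (k:ℝ))
      simpa using this
    have hu : Tendsto (fun n : ℕ => (x₀ + M) / n + k) atTop (𝓝 (k : ℝ)) := by
      have := (tendsto_const_div_atTop_nhds_zero_nat (x₀ + M)).add tendsto_const_nhds (b := (k:ℝ))
      simpa using this
    apply tendsto_of_tendsto_of_tendsto_of_le_of_le' hl hu
    · filter_upwards [eventually_ge_atTop 1] with n hn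
      have hn0 : (0:ℝ) < n := by exact_mod_cast hn
      have heq : (x₀ - M) / n + k = (x₀ + n * k - M) / n := by field_simp; ring
      rw [heq]
      exact (div_le_div_iff_of_pos_right hn0).mpr (hdown n)
    · filter_upwards [eventually_ge_atTop 1] with n hn
      have hn0 : (0:ℝ) < n := by exact_mod_cast hn
      have heq : (x₀ + M) / n + k = (x₀ + n * k + M) / n := by field_simp; ring
      rw [heq]
      exact (div_le_div_iff_of_pos_right hn0).mpr (hup n)
  exact htend.limUnder_eq

lemma aux_no_between (f : AnalyticCircleDiffeo)
    (hcon : ∀ w : ℝ, ∃ k : ℤ, f.toFun w - w = (k : ℝ)) (x y : ℝ) (kx ky : ℤ)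
    (hx : f.toFun x - x = (kx : ℝ)) (hy : f.toFun y - y = (ky : ℝ)) (hlt : kx < ky) : False := by
  have hcont : Continuous (fun x => f.toFun x - x) := by
    rw [continuous_iff_continuousAt]
    exact fun x => ((f.analyticAt_toFun x).continuousAt).sub continuousAt_id
  have hc : ((kx:ℝ) + 1) ≤ (ky : ℝ) := by exact_mod_cast hlt
  have hmem : (kx : ℝ) + 1/2 ∈ Set.uIcc (f.toFun x - x) (f.toFun y - y) := by
    rw [Set.mem_uIcc, hx, hy]
    left
    constructor <;> linarith
  obtain ⟨z, _, hz⟩ := intermediate_value_uIcc hcont.continuousOn hmem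
  obtain ⟨m, hm⟩ := hcon z
  simp only at hz
  rw [hm] at hz
  have hint : (2*m : ℤ) = 2 * kx + 1 := by
    have h2 : 2*(m:ℝ) = 2*(kx:ℝ) + 1 := by rw [hz]; ring
    exact_mod_cast h2
  omega

lemma exists_nonint (f : AnalyticCircleDiffeo) (hf : ¬ IsId f) :
    ∃ w : ℝ, ∀ k : ℤ, f.toFun w - w ≠ (k : ℝ) := by
  by_contra hcon
  push_neg at hcon
  obtain ⟨k0, hk0⟩ := hcon 0
  apply hf
  refine ⟨k0, fun x => ?_⟩
  by_contra hx
  obtain ⟨kx, hkx⟩ := hcon x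
  have hne : kx ≠ k0 := by
    intro h
    apply hx
    rw [h] at hkx
    linarith
  rcases hne.lt_or_gt with h | h
  · exact aux_no_between f hcon x 0 kx k0 hkx hk0 h
  · exact aux_no_between f hcon 0 x k0 kx hk0 hkx h

lemma reach (q₀ : ℝ) (hq : q₀ ∈ Set.Ioo (0:ℝ) 1) (τ : ℝ) (hτ : τ ∈ Set.Ioo (0:ℝ) 1) :
    ∃ H : AnalyticCircleDiffeo, H.toFun 0 = 0 ∧ H.toFun q₀ = τ := by
  have hπ := Real.pi_pos
  set lo := min q₀ τ with hlo
  set hi := max q₀ τ with hhi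
  have hlo0 : 0 < lo := lt_min hq.1 hτ.1
  have hhi1 : hi < 1 := max_lt hq.2 hτ.2
  have hlohi : lo ≤ hi := min_le_max
  -- minimum of auxS on [lo, hi]
  obtain ⟨z, hz, hzmin'⟩ :=
    (isCompact_Icc (a := lo) (b := hi)).exists_isMinOn (Set.nonempty_Icc.2 hlohi)
      (fun x _ => (auxS_analyticAt x).continuousAt.continuousWithinAt)
  have hzmin : ∀ x ∈ Set.Icc lo hi, auxS z ≤ auxS x := fun x hx => hzmin' hx
  set m := auxS z with hm
  have hmpos : 0 < m := auxS_pos ⟨lt_of_lt_of_le hlo0 hz.1, lt_of_le_of_lt hz.2 hhi1⟩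
  -- choose number of steps
  obtain ⟨n₀, hn₀⟩ := exists_nat_ge ((4 * Real.pi / m) * |τ - q₀|)
  set n := n₀ + 1 with hn
  have hnpos : 0 < (n:ℝ) := by positivity
  have hnn : ((4 * Real.pi / m) * |τ - q₀|) ≤ n := by
    have : (n₀ : ℝ) ≤ n := by exact_mod_cast Nat.le_succ n₀
    linarith
  set Δ := (τ - q₀) / n with hΔ
  have hΔabs : |Δ| ≤ m / (4 * Real.pi) := by
    rw [hΔ, abs_div, abs_of_pos hnpos, div_le_div_iff₀ hnpos (by positivity)]
    calc |τ - q₀| * (4 * Real.pi) = ((4 * Real.pi / m) * |τ - q₀|) * m := by field_simp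
      _ ≤ (n:ℝ) * m := by
          apply mul_le_mul_of_nonneg_right hnn hmpos.le
      _ = m * n := by ring
  -- points on segment are in [lo, hi]
  have hseg : ∀ j : ℕ, j ≤ n → q₀ + j * Δ ∈ Set.Icc lo hi := by
    intro j hj
    have hj' : (j:ℝ) ≤ n := by exact_mod_cast hj
    have hj0 : (0:ℝ) ≤ j := Nat.cast_nonneg j
    rcases le_total q₀ τ with h | h
    · have hΔ0 : 0 ≤ Δ := by rw [hΔ]; apply div_nonneg (by linarith) hnpos.le
      constructor
      · calc lo ≤ q₀ := min_le_left _ _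
          _ ≤ q₀ + j * Δ := by nlinarith
      · calc q₀ + j * Δ ≤ q₀ + n * Δ := by nlinarith
          _ = τ := by rw [hΔ]; field_simp; ring
          _ ≤ hi := le_max_right _ _
    · have hΔ0 : Δ ≤ 0 := by
        rw [hΔ]
        apply div_nonpos_of_nonpos_of_nonneg <;> linarith
      constructor
      · calc lo ≤ τ := min_le_right _ _
          _ = q₀ + n * Δ := by rw [hΔ]; field_simp; ring
          _ ≤ q₀ + j * Δ := by nlinarith
      · calc q₀ + j * Δ ≤ q₀ := by nlinarith
          _ ≤ hi := le_max_left _ _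
  -- induction
  have key : ∀ j : ℕ, j ≤ n →
      ∃ H : AnalyticCircleDiffeo, H.toFun 0 = 0 ∧ H.toFun q₀ = q₀ + j * Δ := by
    intro j
    induction j with
    | zero => intro _; exact ⟨idD, rfl, by show q₀ = q₀ + (0:ℕ) * Δ; simp⟩
    | succ i ih =>
      intro hij
      obtain ⟨H, hH0, hHq⟩ := ih (Nat.le_of_succ_le hij)
      set a := q₀ + i * Δ with ha
      have haIcc := hseg i (Nat.le_of_succ_le hij)
      have hsa : m ≤ auxS a := hzmin a haIcc
      have hsapos : 0 < auxS a := lt_of_lt_of_le hmpos hsa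
      set t := Δ / auxS a with ht
      have htabs : |t| ≤ 1 / (4 * Real.pi) := by
        rw [ht, abs_div, abs_of_pos hsapos, div_le_div_iff₀ hsapos (by positivity)]
        calc |Δ| * (4 * Real.pi) ≤ (m / (4 * Real.pi)) * (4 * Real.pi) := by
              apply mul_le_mul_of_nonneg_right hΔabs (by positivity)
          _ = m := by field_simp
          _ ≤ auxS a := hsa
          _ = 1 * auxS a := (one_mul _).symm
      refine ⟨(auxBump t htabs).comp H, ?_, ?_⟩
      · show (auxBump t htabs).toFun (H.toFun 0) = 0
        rw [hH0]
        show 0 + t * auxS 0 = 0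
        rw [auxS_zero]; ring
      · show (auxBump t htabs).toFun (H.toFun q₀) = q₀ + (i+1 : ℕ) * Δ
        rw [hHq]
        show a + t * auxS a = q₀ + (i+1 : ℕ) * Δ
        rw [ht, div_mul_cancel₀ _ hsapos.ne', ha]
        push_cast
        ring
  obtain ⟨H, hH0, hHq⟩ := key n le_rfl
  refine ⟨H, hH0, ?_⟩
  rw [hHq, hΔ]
  field_simp
  ring

end AnalyticCircleDiffeo


open AnalyticCircleDiffeo in
/-- For analytic circle diffeomorphisms `f₁ ≠ id` and `f₂ ≠ id`, there
is an analytic circle diffeomorphism `h` such that `(h ∘ f₁ ∘ h⁻¹) ∘ f₂⁻¹` has a fixed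
point on `ℝ/ℤ`; in particular its rotation number is `0 (mod 1)`. -/
theorem statement4 (f₁ f₂ : AnalyticCircleDiffeo)
    (h₁ : ¬ IsId f₁) (h₂ : ¬ IsId f₂) :
    ∃ h : AnalyticCircleDiffeo,
      (∃ x : ℝ, ∃ k : ℤ,
        (((h.comp f₁).comp h.symm).comp f₂.symm).toFun x = x + (k : ℝ)) ∧
      (∃ k : ℤ, rot (((h.comp f₁).comp h.symm).comp f₂.symm) = (k : ℝ)) := by
  obtain ⟨w, hw⟩ := exists_nonint f₁ h₁
  obtain ⟨u, hu⟩ := exists_nonint f₂ h₂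
  set p := f₁.toFun w with hp
  set v := f₂.toFun u with hv
  set q₀ := Int.fract (p - w) with hq₀
  set τ := Int.fract (v - u) with hτ
  have hfr : ∀ x : ℝ, (∀ k : ℤ, x ≠ (k:ℝ)) → Int.fract x ∈ Set.Ioo (0:ℝ) 1 := by
    intro x hx
    refine ⟨?_, Int.fract_lt_one x⟩
    rcases (Int.fract_nonneg x).lt_or_eq with h | h
    · exact h
    · exfalso
      apply hx ⌊x⌋
      have h2 := Int.floor_add_fract x
      rw [← h] at h2
      linarith
  have hq₀mem : q₀ ∈ Set.Ioo (0:ℝ) 1 := hfr _ (fun k hk => hw k (by rw [hp] at hk; linarith))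
  have hτmem : τ ∈ Set.Ioo (0:ℝ) 1 := hfr _ (fun k hk => hu k (by rw [hv] at hk; linarith))
  obtain ⟨H, hH0, hHq⟩ := reach q₀ hq₀mem τ hτmem
  set h := (H.comp (idD.addConst (-w))).addConst u with hh
  have hhw : h.toFun w = u := by
    show H.toFun (w + -w) + u = u
    rw [show w + -w = (0:ℝ) by ring, hH0]
    ring
  set k₁ : ℤ := ⌊p - w⌋ - ⌊v - u⌋ with hk₁
  have hhp : h.toFun p = v + (k₁ : ℝ) := by
    show H.toFun (p + -w) + u = v + (k₁ : ℝ)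
    have hfl := Int.floor_add_fract (p - w)
    have h1 : p + -w = q₀ + ((⌊p - w⌋ : ℤ) : ℝ) := by rw [hq₀]; linarith
    rw [h1, map_add_int, hHq]
    have hfl2 := Int.floor_add_fract (v - u)
    rw [hk₁]
    push_cast
    linarith
  set G := ((h.comp f₁).comp h.symm).comp f₂.symm with hG
  have hfix : G.toFun (f₂.toFun u) = f₂.toFun u + (k₁ : ℝ) := by
    show h.toFun (f₁.toFun (h.invFun (f₂.invFun (f₂.toFun u)))) = _
    rw [f₂.leftInverse u]
    have hinv : h.invFun u = w := by rw [← hhw]; exact h.leftInverse w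
    rw [hinv, ← hp, hhp, ← hv]
  exact ⟨h, ⟨f₂.toFun u, k₁, hfix⟩, ⟨k₁, rot_eq_of_fixed G _ k₁ hfix⟩⟩
end

section
/- Let Ω ⊂ ℂ be open with ω₀ ∈ Ω, and let U, V ⊂ ℂ be open horizontal strips invariant under z ↦ z+1. Let F : Ω × U → ℂ and G : Ω × V → ℂ be holomorphic in both variables, satisfying F(ω, z+1) = F(ω, z) + 1 and G(ω, z+1) = G(ω, z) + 1, with ∂_z F ≠ 0 and ∂_z G ≠ 0, and with G(ω, ·) injective on V. Let τ : Ω → ℂ be holomorphic and suppose F(ω, G(ω, z)) = G(ω, z + τ(ω)) for all ω ∈ Ω and all z for which both sides are defined. Let γ : [0,1] → ℂ be a C¹ curve with γ(1) = γ(0) + 1 whose image lies in G(ω₀, ·)(V) ∩ U, let Γ := G(ω₀, ·)⁻¹ ∘ γ, and assume the 1-periodic holomorphic function z ↦ ∂_ω G(ω₀, z)/∂_z G(ω₀, z) is holomorphic on a domain in V containing Γ, Γ + τ(ω₀), and the region between these two curves. Then the derivative of τ at ω₀ is given by the contour integral τ'(ω₀) = ∫_γ [∂_ω F(ω₀, w)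 / ∂_z F(ω₀, w)] · ((G(ω₀, ·)⁻¹)'(w))² dw. -/
open Set
open Filter Topology MeasureTheory intervalIntegral

section helpers

lemma chain2 (f : ℂ → ℂ → ℂ) (a b : ℂ)
    (hf : AnalyticAt ℂ (fun p : ℂ × ℂ => f p.1 p.2) (a, b))
    (g : ℂ → ℂ) (g' : ℂ) (hg : HasDerivAt g g' a) (hgb : g a = b) :
    HasDerivAt (fun ω => f ω (g ω))
      (deriv (fun ω => f ω b) a + deriv (f a) b * g') a := by
  have hF : HasFDerivAt (fun p : ℂ × ℂ => f p.1 p.2)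
      (fderiv ℂ (fun p : ℂ × ℂ => f p.1 p.2) (a, b)) (a, b) :=
    hf.differentiableAt.hasFDerivAt
  set Df := fderiv ℂ (fun p : ℂ × ℂ => f p.1 p.2) (a, b) with hDf
  have hc : HasDerivAt (fun ω => (ω, g ω) : ℂ → ℂ × ℂ) (1, g') a :=
    (hasDerivAt_id a).prodMk hg
  have hcomp : HasDerivAt (fun ω => f ω (g ω)) (Df (1, g')) a := by
    have hF' : HasFDerivAt (fun p : ℂ × ℂ => f p.1 p.2) Df ((a, g a) : ℂ × ℂ) := by
      rw [hgb]; exact hF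
    simpa [Function.comp_def] using hF'.comp_hasDerivAt a hc
  have h1 : HasDerivAt (fun ω => f ω b) (Df (1, 0)) a := by
    have hc1 : HasDerivAt (fun ω => (ω, b) : ℂ → ℂ × ℂ) (1, 0) a :=
      (hasDerivAt_id a).prodMk (hasDerivAt_const a b)
    simpa [Function.comp_def] using hF.comp_hasDerivAt a hc1
  have h2 : HasDerivAt (f a) (Df (0, 1)) b := by
    have hc2 : HasDerivAt (fun z => (a, z) : ℂ → ℂ × ℂ) (0, 1) b :=
      (hasDerivAt_const b a).prodMk (hasDerivAt_id b)
    simpa [Function.comp_def] using hF.comp_hasDerivAt b hc2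
  rw [h1.deriv, h2.deriv]
  have : Df (1, g') = Df (1, 0) + Df (0, 1) * g' := by
    have : ((1 : ℂ), g') = (1, 0) + g' • ((0 : ℂ), (1 : ℂ)) := by simp
    rw [this, map_add, _root_.map_smul]
    simp [smul_eq_mul]; ring
  exact this ▸ hcomp

lemma partialz (f : ℂ → ℂ → ℂ) (a b : ℂ)
    (hf : AnalyticAt ℂ (fun p : ℂ × ℂ => f p.1 p.2) (a, b)) :
    HasDerivAt (f a) (deriv (f a) b) b := by
  have : DifferentiableAt ℂ (f a) b := by
    have := hf.differentiableAt.comp b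
      ((differentiableAt_const a).prodMk differentiableAt_id)
    simpa [Function.comp_def] using this
  exact this.hasDerivAt

lemma partialw (f : ℂ → ℂ → ℂ) (a b : ℂ)
    (hf : AnalyticAt ℂ (fun p : ℂ × ℂ => f p.1 p.2) (a, b)) :
    HasDerivAt (fun ω => f ω b) (deriv (fun ω => f ω b) a) a := by
  have : DifferentiableAt ℂ (fun ω => f ω b) a := by
    have := hf.differentiableAt.comp a
      (show DifferentiableAt ℂ (fun ω : ℂ => (ω, b)) a from differentiableAt_id.prodMk (differentiableAt_const b))
    simpa [Function.comp_def] using this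
  exact this.hasDerivAt

lemma pointwise_identity
    (Ω U V : Set ℂ) (hΩ : IsOpen Ω) (ω₀ : ℂ) (hω₀ : ω₀ ∈ Ω)
    (hUo : IsOpen U) (hVo : IsOpen V)
    (F G : ℂ → ℂ → ℂ)
    (hFa : ∀ ω ∈ Ω, ∀ z ∈ U, AnalyticAt ℂ (fun p : ℂ × ℂ => F p.1 p.2) (ω, z))
    (hGa : ∀ ω ∈ Ω, ∀ z ∈ V, AnalyticAt ℂ (fun p : ℂ × ℂ => G p.1 p.2) (ω, z))
    (hFz : ∀ ω ∈ Ω, ∀ z ∈ U, deriv (F ω) z ≠ 0)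
    (hGz : ∀ ω ∈ Ω, ∀ z ∈ V, deriv (G ω) z ≠ 0)
    (τ : ℂ → ℂ) (hτ : ∀ ω ∈ Ω, AnalyticAt ℂ τ ω)
    (hconj : ∀ ω ∈ Ω, ∀ z ∈ V, z + τ ω ∈ V → G ω z ∈ U →
      F ω (G ω z) = G ω (z + τ ω))
    (z : ℂ) (hzV : z ∈ V) (hzτ : z + τ ω₀ ∈ V) (hw : G ω₀ z ∈ U) :
    deriv τ ω₀ =
      deriv (fun ω => F ω (G ω₀ z)) ω₀ / (deriv (F ω₀) (G ω₀ z) * deriv (G ω₀) z)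
      + deriv (fun ω => G ω z) ω₀ / deriv (G ω₀) z
      - deriv (fun ω => G ω (z + τ ω₀)) ω₀ / deriv (G ω₀) (z + τ ω₀) := by
  have hGaz := hGa ω₀ hω₀ z hzV
  have hGaτ := hGa ω₀ hω₀ _ hzτ
  have hFaw := hFa ω₀ hω₀ _ hw
  have hτd : HasDerivAt τ (deriv τ ω₀) ω₀ := (hτ ω₀ hω₀).differentiableAt.hasDerivAt
  -- partial derivative of G in ω at (ω₀, z)
  have hGω : HasDerivAt (fun ω => G ω z) (deriv (fun ω => G ω z) ω₀) ω₀ :=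
    partialw G ω₀ z hGaz
  -- LHS derivative
  have hL : HasDerivAt (fun ω => F ω (G ω z))
      (deriv (fun ω => F ω (G ω₀ z)) ω₀ +
        deriv (F ω₀) (G ω₀ z) * deriv (fun ω => G ω z) ω₀) ω₀ :=
    chain2 F ω₀ (G ω₀ z) hFaw (fun ω => G ω z) _ hGω rfl
  -- RHS derivative
  have hR : HasDerivAt (fun ω => G ω (z + τ ω))
      (deriv (fun ω => G ω (z + τ ω₀)) ω₀ +
        deriv (G ω₀) (z + τ ω₀) * deriv τ ω₀) ω₀ :=
    chain2 G ω₀ (z + τ ω₀) hGaτ (fun ω => z + τ ω) _ (hτd.const_add z) rfl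
  -- eventual equality near ω₀
  have hev : ∀ᶠ ω in 𝓝 ω₀, F ω (G ω z) = G ω (z + τ ω) := by
    have h2 : ∀ᶠ ω in 𝓝 ω₀, z + τ ω ∈ V := by
      have : ContinuousAt (fun ω => z + τ ω) ω₀ := (hτd.const_add z).continuousAt
      exact this (hVo.mem_nhds hzτ)
    have h3 : ∀ᶠ ω in 𝓝 ω₀, G ω z ∈ U := by
      have : ContinuousAt (fun ω => G ω z) ω₀ := hGω.continuousAt
      exact this (hUo.mem_nhds hw)
    filter_upwards [hΩ.mem_nhds hω₀, h2, h3] with ω hΩ' h2' h3'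
    exact hconj ω hΩ' z hzV h2' h3'
  have hL' : HasDerivAt (fun ω => G ω (z + τ ω))
      (deriv (fun ω => F ω (G ω₀ z)) ω₀ +
        deriv (F ω₀) (G ω₀ z) * deriv (fun ω => G ω z) ω₀) ω₀ :=
    hL.congr_of_eventuallyEq (hev.mono fun _ h => h.symm)
  have key : deriv (fun ω => F ω (G ω₀ z)) ω₀ +
      deriv (F ω₀) (G ω₀ z) * deriv (fun ω => G ω z) ω₀ =
      deriv (fun ω => G ω (z + τ ω₀)) ω₀ + deriv (G ω₀) (z + τ ω₀) * deriv τ ω₀ :=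
    hL'.unique hR
  -- chain rule in z
  have hGzd : HasDerivAt (G ω₀) (deriv (G ω₀) z) z := partialz G ω₀ z hGaz
  have hGzdτ : HasDerivAt (G ω₀) (deriv (G ω₀) (z + τ ω₀)) (z + τ ω₀) :=
    partialz G ω₀ _ hGaτ
  have hFzd : HasDerivAt (F ω₀) (deriv (F ω₀) (G ω₀ z)) (G ω₀ z) := partialz F ω₀ _ hFaw
  have hz1 : HasDerivAt (fun z' => F ω₀ (G ω₀ z'))
      (deriv (F ω₀) (G ω₀ z) * deriv (G ω₀) z) z := hFzd.comp z hGzd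
  have hz2 : HasDerivAt (fun z' => G ω₀ (z' + τ ω₀)) (deriv (G ω₀) (z + τ ω₀)) z := by
    simpa [Function.comp_def] using hGzdτ.comp z ((hasDerivAt_id z).add_const (τ ω₀))
  have hevz : ∀ᶠ z' in 𝓝 z, F ω₀ (G ω₀ z') = G ω₀ (z' + τ ω₀) := by
    have h2 : ∀ᶠ z' in 𝓝 z, z' + τ ω₀ ∈ V := by
      have : ContinuousAt (fun z' => z' + τ ω₀) z := (continuous_add_right _).continuousAt
      exact this (hVo.mem_nhds hzτ)
    have h3 : ∀ᶠ z' in 𝓝 z, G ω₀ z' ∈ U := hGzd.continuousAt (hUo.mem_nhds hw)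
    filter_upwards [hVo.mem_nhds hzV, h2, h3] with z' h1' h2' h3'
    exact hconj ω₀ hω₀ z' h1' h2' h3'
  have hchain : deriv (F ω₀) (G ω₀ z) * deriv (G ω₀) z = deriv (G ω₀) (z + τ ω₀) :=
    hz1.unique (hz2.congr_of_eventuallyEq (hevz.mono fun _ h => h))
  have hGz0 : deriv (G ω₀) z ≠ 0 := hGz ω₀ hω₀ z hzV
  have hFz0 : deriv (F ω₀) (G ω₀ z) ≠ 0 := hFz ω₀ hω₀ _ hw
  have hGzτ0 : deriv (G ω₀) (z + τ ω₀) ≠ 0 := hGz ω₀ hω₀ _ hzτ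
  rw [← hchain] at key ⊢
  field_simp
  linear_combination (-1 : ℂ) * key

lemma gamma_reg (V : Set ℂ) (hVo : IsOpen V) (g : ℂ → ℂ)
    (hga : ∀ z ∈ V, AnalyticAt ℂ g z) (hg0 : ∀ z ∈ V, deriv g z ≠ 0)
    (hginj : Set.InjOn g V) (γ Γ : ℝ → ℂ) (hγcont : ContinuousOn γ (Icc 0 1))
    (hΓ : ∀ t ∈ Icc (0:ℝ) 1, Γ t ∈ V ∧ g (Γ t) = γ t) :
    ContinuousOn Γ (Icc (0:ℝ) 1) ∧
      ∀ t ∈ Ioo (0:ℝ) 1, ∀ c : ℂ, HasDerivAt γ c t →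
        HasDerivAt Γ ((deriv g (Γ t))⁻¹ * c) t := by
  have main : ∀ t₀ ∈ Icc (0:ℝ) 1, ∃ ψ : ℂ → ℂ,
      HasStrictDerivAt ψ (deriv g (Γ t₀))⁻¹ (γ t₀) ∧
      Γ =ᶠ[𝓝[Icc (0:ℝ) 1] t₀] (ψ ∘ γ) ∧ ψ (γ t₀) = Γ t₀ := by
    intro t₀ ht₀
    obtain ⟨hz₀V, hgz₀⟩ := hΓ t₀ ht₀
    set z₀ := Γ t₀
    have hstrict : HasStrictDerivAt g (deriv g z₀) z₀ := by
      have := (hga z₀ hz₀V).contDiffAt (n := 1)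
      exact this.hasStrictDerivAt one_ne_zero
    have h0 := hg0 z₀ hz₀V
    set ψ := hstrict.localInverse g (deriv g z₀) z₀ h0 with hψ
    have hri : ∀ᶠ y in 𝓝 (g z₀), g (ψ y) = y :=
      (hstrict.hasStrictFDerivAt_equiv h0).eventually_right_inverse
    have hcont : ContinuousAt ψ (g z₀) :=
      (hstrict.hasStrictFDerivAt_equiv h0).localInverse_continuousAt
    have happ : ψ (g z₀) = z₀ :=
      (hstrict.hasStrictFDerivAt_equiv h0).localInverse_apply_image
    have hmemV : ∀ᶠ y in 𝓝 (g z₀), ψ y ∈ V := by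
      have h : Tendsto ψ (𝓝 (g z₀)) (𝓝 (ψ (g z₀))) := hcont
      rw [happ] at h
      exact h (hVo.mem_nhds hz₀V)
    have hev : ∀ᶠ t in 𝓝[Icc (0:ℝ) 1] t₀, Γ t = (ψ ∘ γ) t := by
      have hγt : Tendsto γ (𝓝[Icc (0:ℝ) 1] t₀) (𝓝 (g z₀)) := by
        rw [hgz₀]; exact hγcont t₀ ht₀
      filter_upwards [hγt (hri.and hmemV), self_mem_nhdsWithin] with t h ht
      obtain ⟨hgψ, hψV⟩ := h
      exact (hginj (hΓ t ht).1 hψV (by rw [(hΓ t ht).2, hgψ])).symm ▸ rfl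
    refine ⟨ψ, ?_, hev, by rw [← hgz₀, happ]⟩
    rw [← hgz₀]
    exact hstrict.to_localInverse h0
  constructor
  · intro t₀ ht₀
    obtain ⟨ψ, hψd, hev, hval⟩ := main t₀ ht₀
    have : ContinuousWithinAt (ψ ∘ γ) (Icc (0:ℝ) 1) t₀ :=
      (hψd.hasDerivAt.continuousAt).comp_continuousWithinAt (hγcont t₀ ht₀)
    exact this.congr_of_eventuallyEq hev hval.symm
  · intro t ht c hc
    obtain ⟨ψ, hψd, hev, hval⟩ := main t (Ioo_subset_Icc_self ht)
    have hev' : Γ =ᶠ[𝓝 t] (ψ ∘ γ) := by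
      rwa [nhdsWithin_eq_nhds.2 (Icc_mem_nhds ht.1 ht.2)] at hev
    have : HasDerivAt (ψ ∘ γ) ((deriv g (Γ t))⁻¹ * c) t :=
      (hψd.hasDerivAt).comp t hc
    exact this.congr_of_eventuallyEq hev'

lemma loop_integral_zero (W : Set ℂ) (hW : IsOpen W) (φ : ℂ → ℂ)
    (hφ : DifferentiableOn ℂ φ W) (τ₀ : ℂ) (Γ Γ' : ℝ → ℂ)
    (hΓcont : ContinuousOn Γ (Icc (0:ℝ) 1))
    (hΓ'cont : ContinuousOn Γ' (Icc (0:ℝ) 1))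
    (hΓd : ∀ t ∈ Ioo (0:ℝ) 1, HasDerivAt Γ (Γ' t) t)
    (hmem : ∀ t ∈ Icc (0:ℝ) 1, ∀ s ∈ Icc (0:ℝ) 1, Γ t + (s:ℂ) * τ₀ ∈ W)
    (hΓcl : Γ 1 = Γ 0 + 1)
    (hφper : ∀ s ∈ Icc (0:ℝ) 1, φ (Γ 0 + (s:ℂ) * τ₀ + 1) = φ (Γ 0 + (s:ℂ) * τ₀)) :
    ∫ t in (0:ℝ)..1, (φ (Γ t + τ₀) - φ (Γ t)) * Γ' t = 0 := by
  have hφan : AnalyticOnNhd ℂ φ W := hφ.analyticOnNhd hW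
  have hφ'an : AnalyticOnNhd ℂ (deriv φ) W := hφan.deriv
  have hφ'cont : ContinuousOn (deriv φ) W := fun z hz => (hφ'an z hz).continuousAt.continuousWithinAt
  have hφcont : ContinuousOn φ W := hφ.continuousOn
  have hφd : ∀ z ∈ W, HasDerivAt φ (deriv φ z) z := fun z hz =>
    ((hφ z hz).differentiableAt (hW.mem_nhds hz)).hasDerivAt
  set g : ℝ → ℝ → ℂ := fun t s => deriv φ (Γ t + (s:ℂ) * τ₀) * (τ₀ * Γ' t) with hg
  -- continuity of the inner map (t,s) ↦ Γ t + s τ₀ into W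
  have hmap : ContinuousOn (fun p : ℝ × ℝ => Γ p.1 + (p.2:ℂ) * τ₀)
      (Icc (0:ℝ) 1 ×ˢ Icc (0:ℝ) 1) := by
    apply ContinuousOn.add
    · exact hΓcont.comp continuous_fst.continuousOn (fun p hp => hp.1)
    · exact (Continuous.mul (by continuity) continuous_const).continuousOn
  have hmapW : MapsTo (fun p : ℝ × ℝ => Γ p.1 + (p.2:ℂ) * τ₀)
      (Icc (0:ℝ) 1 ×ˢ Icc (0:ℝ) 1) W := fun p hp => hmem p.1 hp.1 p.2 hp.2
  have hgcont : ContinuousOn (fun p : ℝ × ℝ => g p.1 p.2)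
      (Icc (0:ℝ) 1 ×ˢ Icc (0:ℝ) 1) := by
    apply ContinuousOn.mul
    · exact (hφ'cont.comp hmap hmapW)
    · exact continuous_const.continuousOn.mul
        (hΓ'cont.comp continuous_fst.continuousOn (fun p hp => hp.1))
  -- step 1 : inner FTC in s
  have step1 : ∀ t ∈ Icc (0:ℝ) 1,
      (φ (Γ t + τ₀) - φ (Γ t)) * Γ' t = ∫ s in (0:ℝ)..1, g t s := by
    intro t ht
    have hline : ∀ s : ℝ, HasDerivAt (fun s : ℝ => Γ t + (s:ℂ) * τ₀) τ₀ s := by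
      intro s
      have h1 : HasDerivAt (fun s : ℝ => (s:ℂ) * τ₀) τ₀ s := by
        simpa using (hasDerivAt_id s).ofReal_comp.mul_const τ₀
      simpa using h1.const_add (Γ t)
    have hu : ∀ s ∈ Icc (0:ℝ) 1,
        HasDerivAt (fun s : ℝ => φ (Γ t + (s:ℂ) * τ₀))
          (deriv φ (Γ t + (s:ℂ) * τ₀) * τ₀) s := by
      intro s hs
      have hz := hmem t ht s hs
      have := (hφd _ hz).scomp s (hline s)
      simpa [smul_eq_mul, mul_comm, Function.comp_def] using this
    have hint : IntervalIntegrable (fun s : ℝ => deriv φ (Γ t + (s:ℂ) * τ₀) * τ₀)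
        volume 0 1 := by
      apply ContinuousOn.intervalIntegrable
      rw [uIcc_of_le zero_le_one]
      apply ContinuousOn.mul _ continuous_const.continuousOn
      exact hφ'cont.comp (by fun_prop) (fun s hs => hmem t ht s hs)
    have hftc := integral_eq_sub_of_hasDerivAt_of_le zero_le_one
      (fun s hs => ((hu s hs).continuousAt.continuousWithinAt)) (fun s hs => hu s (Ioo_subset_Icc_self hs)) hint
    have : ∫ s in (0:ℝ)..1, g t s
        = (∫ s in (0:ℝ)..1, deriv φ (Γ t + (s:ℂ) * τ₀) * τ₀) * Γ' t := by
      rw [← intervalIntegral.integral_mul_const]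
      congr 1; ext s; ring
    rw [this, hftc]
    push_cast
    ring_nf
  -- step 3 : inner FTC in t for fixed s
  have step3 : ∀ s ∈ Icc (0:ℝ) 1, ∫ t in (0:ℝ)..1, g t s = 0 := by
    intro s hs
    have hu : ∀ t ∈ Ioo (0:ℝ) 1,
        HasDerivAt (fun t : ℝ => τ₀ * φ (Γ t + (s:ℂ) * τ₀))
          (g t s) t := by
      intro t ht
      have hz := hmem t (Ioo_subset_Icc_self ht) s hs
      have hin : HasDerivAt (fun t : ℝ => Γ t + (s:ℂ) * τ₀) (Γ' t) t :=
        (hΓd t ht).add_const _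
      have := ((hφd _ hz).scomp t hin).const_mul τ₀
      simpa [g, smul_eq_mul] using this.congr_deriv (by simp only [smul_eq_mul]; ring)
    have hcont2 : ContinuousOn (fun t : ℝ => τ₀ * φ (Γ t + (s:ℂ) * τ₀)) (Icc (0:ℝ) 1) :=
      continuous_const.continuousOn.mul
        (hφcont.comp (by fun_prop : ContinuousOn (fun t : ℝ => Γ t + (s:ℂ)*τ₀) (Icc (0:ℝ) 1))
          (fun t ht => hmem t ht s hs))
    have hint : IntervalIntegrable (fun t => g t s) volume 0 1 := by
      apply ContinuousOn.intervalIntegrable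
      rw [uIcc_of_le zero_le_one]
      apply ContinuousOn.mul
      · exact hφ'cont.comp (by fun_prop) (fun t ht => hmem t ht s hs)
      · exact continuous_const.continuousOn.mul hΓ'cont
    have hftc := integral_eq_sub_of_hasDerivAt_of_le zero_le_one hcont2 hu hint
    rw [hftc, hΓcl]
    have harg : Γ 0 + 1 + (s:ℂ) * τ₀ = Γ 0 + (s:ℂ) * τ₀ + 1 := by ring
    rw [harg, hφper s hs, sub_self]
  -- Fubini
  have hInt : IntegrableOn (fun p : ℝ × ℝ => g p.1 p.2) (Icc (0:ℝ) 1 ×ˢ Icc (0:ℝ) 1)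
      volume := hgcont.integrableOn_compact (isCompact_Icc.prod isCompact_Icc)
  have hswap : ∫ t in (0:ℝ)..1, ∫ s in (0:ℝ)..1, g t s
      = ∫ s in (0:ℝ)..1, ∫ t in (0:ℝ)..1, g t s := by
    simp_rw [intervalIntegral.integral_of_le zero_le_one]
    apply MeasureTheory.integral_integral_swap
    rw [Measure.prod_restrict]
    refine (MeasureTheory.IntegrableOn.mono_set ?_
      (prod_mono Ioc_subset_Icc_self Ioc_subset_Icc_self))
    rwa [← Measure.volume_eq_prod]
  calc ∫ t in (0:ℝ)..1, (φ (Γ t + τ₀) - φ (Γ t)) * Γ' t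
      = ∫ t in (0:ℝ)..1, ∫ s in (0:ℝ)..1, g t s := by
        apply intervalIntegral.integral_congr
        intro t ht
        exact step1 t (by rwa [uIcc_of_le zero_le_one] at ht)
    _ = ∫ s in (0:ℝ)..1, ∫ t in (0:ℝ)..1, g t s := hswap
    _ = ∫ s in (0:ℝ)..1, (0:ℂ) := by
        apply intervalIntegral.integral_congr
        intro s hs
        exact step3 s (by rwa [uIcc_of_le zero_le_one] at hs)
    _ = 0 := by simp
end helpers

/-- derivative of the complex rotation number. Let `Ω ∋ ω₀` be open,
let `U, V` be open horizontal strips (invariant under `z ↦ z + 1`), let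
`F, G : Ω × (U or V) → ℂ` be holomorphic in both variables, commuting with `z ↦ z + 1`,
with nonvanishing `z`-derivatives and `G(ω,·)` injective, and let `τ` be holomorphic
with the conjugacy equation `F(ω, G(ω,z)) = G(ω, z + τ(ω))`. If `γ` is a `C¹` lift of a
simple loop winding once around the cylinder, lying in `G(ω₀,·)(V) ∩ U`, with lift
`Γ = G(ω₀,·)⁻¹ ∘ γ`, and the 1-periodic function `z ↦ ∂_ω G(ω₀,z)/∂_z G(ω₀,z)` is
holomorphic on a domain `W ⊆ V` containing `Γ`, `Γ + τ(ω₀)` and the region between them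
(the linear homotopy between the two curves), then
`τ'(ω₀) = ∫_γ (∂_ω F(ω₀,w)/∂_z F(ω₀,w)) ((G(ω₀,·)⁻¹)'(w))² dw`, where
`(G(ω₀,·)⁻¹)'(γ t) = 1 / ∂_z G(ω₀, Γ t)`. -/
theorem statement13
    (Ω U V : Set ℂ) (hΩ : IsOpen Ω) (ω₀ : ℂ) (hω₀ : ω₀ ∈ Ω)
    (hU : ∃ a b : ℝ, U = {z : ℂ | a < z.im ∧ z.im < b})
    (hV : ∃ a b : ℝ, V = {z : ℂ | a < z.im ∧ z.im < b})
    (F G : ℂ → ℂ → ℂ)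
    (hFa : ∀ ω ∈ Ω, ∀ z ∈ U, AnalyticAt ℂ (fun p : ℂ × ℂ => F p.1 p.2) (ω, z))
    (hGa : ∀ ω ∈ Ω, ∀ z ∈ V, AnalyticAt ℂ (fun p : ℂ × ℂ => G p.1 p.2) (ω, z))
    (hFper : ∀ ω ∈ Ω, ∀ z ∈ U, F ω (z + 1) = F ω z + 1)
    (hGper : ∀ ω ∈ Ω, ∀ z ∈ V, G ω (z + 1) = G ω z + 1)
    (hFz : ∀ ω ∈ Ω, ∀ z ∈ U, deriv (F ω) z ≠ 0)
    (hGz : ∀ ω ∈ Ω, ∀ z ∈ V, deriv (G ω) z ≠ 0)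
    (hGinj : ∀ ω ∈ Ω, Set.InjOn (G ω) V)
    (τ : ℂ → ℂ) (hτ : ∀ ω ∈ Ω, AnalyticAt ℂ τ ω)
    (hconj : ∀ ω ∈ Ω, ∀ z ∈ V, z + τ ω ∈ V → G ω z ∈ U →
      F ω (G ω z) = G ω (z + τ ω))
    (γ Γ : ℝ → ℂ)
    (hγC1 : ContDiffOn ℝ 1 γ (Set.Icc (0 : ℝ) 1))
    (hγcl : γ 1 = γ 0 + 1)
    (hγim : ∀ t ∈ Set.Icc (0 : ℝ) 1, γ t ∈ U ∧ γ t ∈ G ω₀ '' V)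
    (hΓ : ∀ t ∈ Set.Icc (0 : ℝ) 1, Γ t ∈ V ∧ G ω₀ (Γ t) = γ t)
    (W : Set ℂ) (hW : IsOpen W) (hWV : W ⊆ V)
    (hWper : ∀ z ∈ W, z + 1 ∈ W)
    (hWbetween : ∀ t ∈ Set.Icc (0 : ℝ) 1, ∀ s ∈ Set.Icc (0 : ℝ) 1,
      Γ t + (s : ℂ) * τ ω₀ ∈ W)
    (hhol : DifferentiableOn ℂ
      (fun z => deriv (fun ω => G ω z) ω₀ / deriv (G ω₀) z) W) :
    deriv τ ω₀ =
      ∫ t in (0 : ℝ)..1,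
        (deriv (fun ω => F ω (γ t)) ω₀ / deriv (F ω₀) (γ t)) *
          (1 / deriv (G ω₀) (Γ t)) ^ 2 * deriv γ t := by
  have hUo : IsOpen U := by
    obtain ⟨a, b, rfl⟩ := hU
    exact isOpen_Ioo.preimage Complex.continuous_im
  have hVo : IsOpen V := by
    obtain ⟨a, b, rfl⟩ := hV
    exact isOpen_Ioo.preimage Complex.continuous_im
  have hVadd : ∀ z ∈ V, z + 1 ∈ V := by
    obtain ⟨a, b, rfl⟩ := hV
    intro z hz; simpa using hz
  set τ₀ := τ ω₀ with hτ₀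
  -- basic memberships
  have hΓV : ∀ t ∈ Icc (0:ℝ) 1, Γ t ∈ V := fun t ht => (hΓ t ht).1
  have hΓW : ∀ t ∈ Icc (0:ℝ) 1, Γ t ∈ W := by
    intro t ht
    have := hWbetween t ht 0 ⟨le_rfl, zero_le_one⟩
    simpa using this
  have hΓτW : ∀ t ∈ Icc (0:ℝ) 1, Γ t + τ₀ ∈ W := by
    intro t ht
    have := hWbetween t ht 1 ⟨zero_le_one, le_rfl⟩
    simpa using this
  have hΓτV : ∀ t ∈ Icc (0:ℝ) 1, Γ t + τ₀ ∈ V := fun t ht => hWV (hΓτW t ht)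
  -- G ω₀ analytic on V with nonzero derivative
  have hgan : ∀ z ∈ V, AnalyticAt ℂ (G ω₀) z := by
    intro z hz
    have := (hGa ω₀ hω₀ z hz).comp (x := z)
      ((analyticAt_const (v := ω₀)).prod (analyticAt_id))
    simpa [Function.comp_def] using this
  have hg0 : ∀ z ∈ V, deriv (G ω₀) z ≠ 0 := hGz ω₀ hω₀
  have hganV : AnalyticOnNhd ℂ (G ω₀) V := fun z hz => hgan z hz
  have hg'cont : ContinuousOn (deriv (G ω₀)) V := fun z hz =>
    (hganV.deriv z hz).continuousAt.continuousWithinAt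
  -- γ facts
  have hγcont : ContinuousOn γ (Icc (0:ℝ) 1) := hγC1.continuousOn
  set q : ℝ → ℂ := fun t => derivWithin γ (Icc (0:ℝ) 1) t with hq
  have hqcont : ContinuousOn q (Icc (0:ℝ) 1) :=
    hγC1.continuousOn_derivWithin (uniqueDiffOn_Icc one_pos) le_rfl
  have hγd : ∀ t ∈ Ioo (0:ℝ) 1, HasDerivAt γ (q t) t := by
    intro t ht
    have hmem : Icc (0:ℝ) 1 ∈ 𝓝 t := Icc_mem_nhds ht.1 ht.2
    have hd : DifferentiableAt ℝ γ t :=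
      ((hγC1.differentiableOn one_ne_zero) t (Ioo_subset_Icc_self ht)).differentiableAt hmem
    have : q t = deriv γ t := derivWithin_of_mem_nhds hmem
    rw [this]
    exact hd.hasDerivAt
  have hqd : ∀ t ∈ Ioo (0:ℝ) 1, q t = deriv γ t := fun t ht =>
    derivWithin_of_mem_nhds (Icc_mem_nhds ht.1 ht.2)
  -- Γ regularity
  obtain ⟨hΓcont, hΓdgen⟩ := gamma_reg V hVo (G ω₀) hgan hg0 (hGinj ω₀ hω₀) γ Γ hγcont hΓ
  set Γ' : ℝ → ℂ := fun t => (deriv (G ω₀) (Γ t))⁻¹ * q t with hΓ'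
  have hΓ'cont : ContinuousOn Γ' (Icc (0:ℝ) 1) := by
    apply ContinuousOn.mul _ hqcont
    exact (hg'cont.comp hΓcont hΓV).inv₀ (fun t ht => hg0 _ (hΓV t ht))
  have hΓd : ∀ t ∈ Ioo (0:ℝ) 1, HasDerivAt Γ (Γ' t) t := fun t ht =>
    hΓdgen t ht (q t) (hγd t ht)
  -- Γ 1 = Γ 0 + 1
  have h0I : (0:ℝ) ∈ Icc (0:ℝ) 1 := ⟨le_rfl, zero_le_one⟩
  have h1I : (1:ℝ) ∈ Icc (0:ℝ) 1 := ⟨zero_le_one, le_rfl⟩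
  have hΓcl : Γ 1 = Γ 0 + 1 := by
    apply hGinj ω₀ hω₀ (hΓV 1 h1I) (hVadd _ (hΓV 0 h0I))
    rw [(hΓ 1 h1I).2, hGper ω₀ hω₀ _ (hΓV 0 h0I), (hΓ 0 h0I).2, hγcl]
  -- periodicity of φ
  set φ : ℂ → ℂ := fun z => deriv (fun ω => G ω z) ω₀ / deriv (G ω₀) z with hφdef
  have hφper : ∀ z ∈ V, φ (z + 1) = φ z := by
    intro z hz
    have e1 : deriv (fun ω => G ω (z + 1)) ω₀ = deriv (fun ω => G ω z) ω₀ := by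
      have hev : (fun ω => G ω (z + 1)) =ᶠ[𝓝 ω₀] (fun ω => G ω z + 1) := by
        filter_upwards [hΩ.mem_nhds hω₀] with ω hω
        exact hGper ω hω z hz
      rw [hev.deriv_eq]
      simp
    have e2 : deriv (G ω₀) (z + 1) = deriv (G ω₀) z := by
      have h3 : deriv (fun z' => G ω₀ (z' + 1)) z = deriv (G ω₀) (z + 1) := by
        simpa using deriv_comp_add_const (G ω₀) 1 z
      have hev : (fun z' => G ω₀ (z' + 1)) =ᶠ[𝓝 z] (fun z' => G ω₀ z' + 1) := by
        filter_upwards [hVo.mem_nhds hz] with z' hz'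
        exact hGper ω₀ hω₀ z' hz'
      rw [← h3, hev.deriv_eq]
      simp
    simp only [hφdef, e1, e2]
  -- loop integral vanishes
  have hloop : ∫ t in (0:ℝ)..1, (φ (Γ t + τ₀) - φ (Γ t)) * Γ' t = 0 := by
    apply loop_integral_zero W hW φ hhol τ₀ Γ Γ' hΓcont hΓ'cont hΓd hWbetween hΓcl
    intro s hs
    exact hφper _ (hWV (hWbetween 0 h0I s hs))
  -- FTC for the constant deriv τ ω₀
  have hconst : ∫ t in (0:ℝ)..1, deriv τ ω₀ * Γ' t = deriv τ ω₀ := by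
    have hftc := integral_eq_sub_of_hasDerivAt_of_le zero_le_one
      (f := fun t => deriv τ ω₀ * Γ t)
      (continuous_const.continuousOn.mul hΓcont)
      (fun t ht => (hΓd t ht).const_mul (deriv τ ω₀))
      (by
        apply ContinuousOn.intervalIntegrable
        rw [uIcc_of_le zero_le_one]
        exact continuous_const.continuousOn.mul hΓ'cont)
    rw [hftc]
    simp only [hΓcl]
    ring
  -- pointwise identity on the open interval
  have hpt : ∀ t ∈ Ioo (0:ℝ) 1,
      (deriv (fun ω => F ω (γ t)) ω₀ / deriv (F ω₀) (γ t)) *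
        (1 / deriv (G ω₀) (Γ t)) ^ 2 * deriv γ t
      = deriv τ ω₀ * Γ' t + (φ (Γ t + τ₀) - φ (Γ t)) * Γ' t := by
    intro t ht
    have htI := Ioo_subset_Icc_self ht
    have hGγ : G ω₀ (Γ t) = γ t := (hΓ t htI).2
    have hwU : G ω₀ (Γ t) ∈ U := by rw [hGγ]; exact (hγim t htI).1
    have hid := pointwise_identity Ω U V hΩ ω₀ hω₀ hUo hVo F G hFa hGa hFz hGz τ hτ
      hconj (Γ t) (hΓV t htI) (hΓτV t htI) hwU
    rw [hGγ] at hid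
    have hGz0 : deriv (G ω₀) (Γ t) ≠ 0 := hg0 _ (hΓV t htI)
    have hFz0 : deriv (F ω₀) (γ t) ≠ 0 := by
      rw [← hGγ]; exact hFz ω₀ hω₀ _ hwU
    rw [← hqd t ht]
    have key : deriv (fun ω => F ω (γ t)) ω₀ /
        (deriv (F ω₀) (γ t) * deriv (G ω₀) (Γ t))
        = deriv τ ω₀ + (φ (Γ t + τ₀) - φ (Γ t)) := by
      simp only [hφdef, hτ₀]
      rw [hid]
      ring
    have hrw : deriv τ ω₀ * Γ' t + (φ (Γ t + τ₀) - φ (Γ t)) * Γ' t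
        = (deriv (fun ω => F ω (γ t)) ω₀ /
            (deriv (F ω₀) (γ t) * deriv (G ω₀) (Γ t))) * Γ' t := by
      rw [key]; ring
    rw [hrw]
    simp only [hΓ']
    field_simp
  -- final assembly
  have hint1 : IntervalIntegrable (fun t => deriv τ ω₀ * Γ' t) volume 0 1 := by
    apply ContinuousOn.intervalIntegrable
    rw [uIcc_of_le zero_le_one]
    exact continuous_const.continuousOn.mul hΓ'cont
  have hφcont : ContinuousOn φ W := hhol.continuousOn
  have hint2 : IntervalIntegrable (fun t => (φ (Γ t + τ₀) - φ (Γ t)) * Γ' t) volume 0 1 := by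
    apply ContinuousOn.intervalIntegrable
    rw [uIcc_of_le zero_le_one]
    apply ContinuousOn.mul _ hΓ'cont
    apply ContinuousOn.sub
    · exact hφcont.comp (hΓcont.add continuous_const.continuousOn) hΓτW
    · exact hφcont.comp hΓcont hΓW
  have hae : ∀ᵐ t : ℝ ∂volume, t ∈ Set.uIoc (0:ℝ) 1 →
      ((deriv (fun ω => F ω (γ t)) ω₀ / deriv (F ω₀) (γ t)) *
        (1 / deriv (G ω₀) (Γ t)) ^ 2 * deriv γ t
      = deriv τ ω₀ * Γ' t + (φ (Γ t + τ₀) - φ (Γ t)) * Γ' t) := by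
    have h1 : ∀ᵐ t : ℝ ∂volume, t ≠ 1 := by
      rw [ae_iff]
      simp only [ne_eq, not_not]
      have : {t : ℝ | t = 1} = {1} := rfl
      rw [this]
      exact measure_singleton 1
    filter_upwards [h1] with t ht1 htΙ
    rw [uIoc_of_le zero_le_one] at htΙ
    exact hpt t ⟨htΙ.1, lt_of_le_of_ne htΙ.2 ht1⟩
  calc deriv τ ω₀
      = (∫ t in (0:ℝ)..1, deriv τ ω₀ * Γ' t)
        + ∫ t in (0:ℝ)..1, (φ (Γ t + τ₀) - φ (Γ t)) * Γ' t := by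
        rw [hconst, hloop, add_zero]
    _ = ∫ t in (0:ℝ)..1,
        (deriv τ ω₀ * Γ' t + (φ (Γ t + τ₀) - φ (Γ t)) * Γ' t) := by
        rw [intervalIntegral.integral_add hint1 hint2]
    _ = ∫ t in (0:ℝ)..1,
        (deriv (fun ω => F ω (γ t)) ω₀ / deriv (F ω₀) (γ t)) *
          (1 / deriv (G ω₀) (Γ t)) ^ 2 * deriv γ t := by
        exact (intervalIntegral.integral_congr_ae hae).symm
end
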